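/- The fixed subgroup W^G is generated by the set {w_X | X∈𝒮} of longest elements of the finite standard parabolic subgroups corresponding to the orbits of G in S. -/

import Mathlib

noncomputable section

open Real

namespace CoxeterFixedPoints

/-- `(V, B, ε)` is a root basis of the Coxeter graph whose Coxeter matrix is `M`
(the entry `0` of a Coxeter matrix stands for `∞`). -/
def IsRootBasis {S V : Type*} [AddCommGroup V] [Module ℝ V]
    (M : CoxeterMatrix S) (B : V →ₗ[ℝ] V →ₗ[ℝ] ℝ) (ε : S → V) : Prop :=
  (∀ x y : V, B x y = B y x) ∧
  (∀ s : S, B (ε s) (ε s) = 1) ∧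
  (∀ s t : S, s ≠ t → M s t ≠ 0 →
    B (ε s) (ε t) = - Real.cos (Real.pi / (M s t : ℝ))) ∧
  (∀ s t : S, s ≠ t → M s t = 0 → B (ε s) (ε t) ≤ -1) ∧
  (∃ χ : V →ₗ[ℝ] ℝ, ∀ s : S, 0 < χ (ε s))

/-- The standard parabolic subgroup `W_X` of `W` generated by `X ⊆ S`. -/
def parabolic {S W : Type*} [Group W] {M : CoxeterMatrix S} (cs : CoxeterSystem M W)
    (X : Set S) : Subgroup W :=
  Subgroup.closure (cs.simple '' X)

/-- `w` is the longest element of the standard parabolic subgroup `W_X`. -/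
def IsLongestElement {S W : Type*} [Group W] {M : CoxeterMatrix S} (cs : CoxeterSystem M W)
    (X : Set S) (w : W) : Prop :=
  w ∈ parabolic cs X ∧ ∀ u ∈ parabolic cs X, cs.length u ≤ cs.length w

/-- `X ∈ 𝒮`, i.e. `X` is an orbit of `G` in `S` such that `W_X` is finite. -/
def IsFinOrbit {S W : Type*} [Group W] {M : CoxeterMatrix S} (cs : CoxeterSystem M W)
    (G : Type*) [Group G] [MulAction G S] (X : Set S) : Prop :=
  (∃ s : S, X = MulAction.orbit G s) ∧ ((parabolic cs X : Set W)).Finite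

/-- `a_X = Σ_{s ∈ X} ε_s`. -/
def aVec {S V : Type*} [AddCommGroup V] [Module ℝ V] (ε : S → V) (X : Set S) : V :=
  ∑ᶠ s ∈ X, ε s

/-- `ε̃_X = a_X / ⟨a_X, a_X⟩^{1/2}`. -/
def epsTilde {S V : Type*} [AddCommGroup V] [Module ℝ V]
    (B : V →ₗ[ℝ] V →ₗ[ℝ] ℝ) (ε : S → V) (X : Set S) : V :=
  (Real.sqrt (B (aVec ε X) (aVec ε X)))⁻¹ • aVec ε X

/-- There is no edge of the Coxeter graph of `M` between a vertex of `X` and a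
(distinct) vertex of `Y`. -/
def NoEdges {S : Type*} (M : CoxeterMatrix S) (X Y : Set S) : Prop :=
  ∀ s ∈ X, ∀ t ∈ Y, s ≠ t → M s t = 2

/-- `X` is of type I : `Γ_X` has no edge. -/
def TypeI {S : Type*} (M : CoxeterMatrix S) (X : Set S) : Prop :=
  ∀ s ∈ X, ∀ t ∈ X, s ≠ t → M s t = 2

/-- `X` is of type II_m : `X` is partitioned into pairs `{s, ι s}` with `m_{s, ι s} = m ≥ 3`
(`m` finite), and `m_{s,t} = 2` for `s, t ∈ X` not belonging to a common pair. -/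
def TypeII {S : Type*} (M : CoxeterMatrix S) (X : Set S) (m : ℕ) : Prop :=
  3 ≤ m ∧ ∃ ι : S → S,
    (∀ s ∈ X, ι s ∈ X ∧ ι s ≠ s ∧ ι (ι s) = s ∧ M s (ι s) = m) ∧
    (∀ s ∈ X, ∀ t ∈ X, t ≠ s → t ≠ ι s → M s t = 2)

/-- `Γ_{X ∪ Y}` is a disjoint union of single edges with label `m ≥ 3` (possibly `m = ∞`,
encoded by `0`), each edge joining a vertex of `X` to a vertex of `Y` :
bi-orbit of type (1). -/
def BiOrbit1 {S : Type*} (M : CoxeterMatrix S) (X Y : Set S) (m : ℕ) : Prop :=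
  (m = 0 ∨ 3 ≤ m) ∧
  ∃ σ : S → S, Set.BijOn σ X Y ∧
    (∀ x ∈ X, M x (σ x) = m) ∧
    (∀ x ∈ X, ∀ y ∈ Y, y ≠ σ x → M x y = 2) ∧
    NoEdges M X X ∧ NoEdges M Y Y

/-- `Γ_{E ∪ C}` is a disjoint union of paths `a − b − c` with both labels `3`, whose end
vertices lie in `E` and whose middle vertex lies in `C` : bi-orbit of type (2)
(in one of the two orientations). -/
def BiOrbit2 {S : Type*} (M : CoxeterMatrix S) (E C : Set S) : Prop :=
  ∃ τ : S → S, Set.MapsTo τ E C ∧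
    (∀ c ∈ C, {e | e ∈ E ∧ τ e = c}.ncard = 2) ∧
    (∀ e ∈ E, M e (τ e) = 3) ∧
    (∀ e ∈ E, ∀ c ∈ C, c ≠ τ e → M e c = 2) ∧
    NoEdges M E E ∧ NoEdges M C C

/-- `Γ_{D ∪ C}` is a disjoint union of paths `a − b − c − d` with `a, d ∈ D`, `b, c ∈ C`,
outer labels `3` and middle label `mid` : used for bi-orbits of types (3) and (4). -/
def BiOrbitPath {S : Type*} (M : CoxeterMatrix S) (D C : Set S) (mid : ℕ) : Prop :=
  ∃ σ ι : S → S, Set.BijOn σ D C ∧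
    (∀ c ∈ C, ι c ∈ C ∧ ι c ≠ c ∧ ι (ι c) = c ∧ M c (ι c) = mid) ∧
    (∀ d ∈ D, M d (σ d) = 3) ∧
    (∀ d ∈ D, ∀ c ∈ C, c ≠ σ d → M d c = 2) ∧
    (∀ c ∈ C, ∀ c' ∈ C, c' ≠ c → c' ≠ ι c → M c c' = 2) ∧
    NoEdges M D D

/-- Bi-orbit of type (3) : paths `a − b − c − d` with all labels `3`. -/
def BiOrbit3 {S : Type*} (M : CoxeterMatrix S) (D C : Set S) : Prop :=
  BiOrbitPath M D C 3

/-- Bi-orbit of type (4) : paths `a − b − c − d` with labels `3, 4, 3`. -/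
def BiOrbit4 {S : Type*} (M : CoxeterMatrix S) (D C : Set S) : Prop :=
  BiOrbitPath M D C 4

/-- `Γ_{L ∪ C}` is a disjoint union of stars with center in `C`, three leaves in `L`
and all labels `3` : bi-orbit of type (5) (in one of the two orientations). -/
def BiOrbit5 {S : Type*} (M : CoxeterMatrix S) (L C : Set S) : Prop :=
  ∃ τ : S → S, Set.MapsTo τ L C ∧
    (∀ c ∈ C, {l | l ∈ L ∧ τ l = c}.ncard = 3) ∧
    (∀ l ∈ L, M l (τ l) = 3) ∧
    (∀ l ∈ L, ∀ c ∈ C, c ≠ τ l → M l c = 2) ∧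
    NoEdges M L L ∧ NoEdges M C C

/-- `m` is the entry `m̃_{X,Y}` of the Coxeter matrix `M̃` of `Γ̃` (`0` stands for `∞`). -/
def TildeMIs {S : Type*} (M : CoxeterMatrix S) (X Y : Set S) (m : ℕ) : Prop :=
  (X = Y ∧ m = 1) ∨
  (X ≠ Y ∧
    ((NoEdges M X Y ∧ m = 2) ∨
     (¬ NoEdges M X Y ∧
       ((BiOrbit1 M X Y m ∨ BiOrbit1 M Y X m) ∨
        ((BiOrbit2 M X Y ∨ BiOrbit2 M Y X) ∧ m = 4) ∨
        ((BiOrbit3 M X Y ∨ BiOrbit3 M Y X) ∧ m = 4) ∨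
        ((BiOrbit4 M X Y ∨ BiOrbit4 M Y X) ∧ m = 8) ∨
        ((BiOrbit5 M X Y ∨ BiOrbit5 M Y X) ∧ m = 6) ∨
        ((∀ k : ℕ, ¬ BiOrbit1 M X Y k ∧ ¬ BiOrbit1 M Y X k) ∧
         (¬ BiOrbit2 M X Y ∧ ¬ BiOrbit2 M Y X) ∧
         (¬ BiOrbit3 M X Y ∧ ¬ BiOrbit3 M Y X) ∧
         (¬ BiOrbit4 M X Y ∧ ¬ BiOrbit4 M Y X) ∧
         (¬ BiOrbit5 M X Y ∧ ¬ BiOrbit5 M Y X) ∧ m = 0)))))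

/-- `v_X = |{t ∈ Y | m_{s,t} ≥ 3}|` (including `m_{s,t} = ∞`, encoded by `0`),
for a chosen `s` in the other orbit. -/
def vcount {S : Type*} (M : CoxeterMatrix S) (Y : Set S) (s : S) : ℕ :=
  {t | t ∈ Y ∧ (M s t = 0 ∨ 3 ≤ M s t)}.ncard

/-- `p_X = Σ_{t ∈ Y} ⟨ε_s, ε_t⟩`, for a chosen `s` in the other orbit. -/
def psum {S V : Type*} [AddCommGroup V] [Module ℝ V]
    (B : V →ₗ[ℝ] V →ₗ[ℝ] ℝ) (ε : S → V) (Y : Set S) (s : S) : ℝ :=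
  ∑ᶠ t ∈ Y, B (ε s) (ε t)

/-- The subgroup `W^G` of elements of `W` fixed by the action of `G` on `W`
given by `φ : G →* MulAut W`. -/
def fixedSubgroup {W G : Type*} [Group W] [Group G] (φ : G →* MulAut W) : Subgroup W where
  carrier := {w | ∀ g : G, φ g w = w}
  one_mem' := fun g => map_one (φ g)
  mul_mem' := by
    intro a b ha hb g
    rw [map_mul, ha g, hb g]
  inv_mem' := by
    intro a ha g
    rw [map_inv, ha g]

/-- The subspace `V^G` of vectors of `V` fixed by the action of `G` on `V`
given by `ρ : G →* GL(V)`. -/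
def fixedSubmodule {V G : Type*} [AddCommGroup V] [Module ℝ V] [Group G]
    (ρ : G →* (V ≃ₗ[ℝ] V)) : Submodule ℝ V where
  carrier := {x | ∀ g : G, ρ g x = x}
  zero_mem' := fun g => map_zero (ρ g)
  add_mem' := by
    intro a b ha hb g
    rw [map_add, ha g, hb g]
  smul_mem' := by
    intro c x hx g
    rw [map_smul, hx g]



namespace CoxFix

/-- Auxiliary group for the reflection cocycle: pairs `(w, f)` with twisted multiplication. -/
structure CGrp (W : Type*) [Group W] where
  el : W
  fn : W → ZMod 2

namespace CGrp

variable {W : Type*} [Group W]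

instance : Group (CGrp W) where
  mul a b := ⟨a.el * b.el, fun t => a.fn (b.el * t * b.el⁻¹) + b.fn t⟩
  one := ⟨1, 0⟩
  inv a := ⟨a.el⁻¹, fun t => a.fn (a.el⁻¹ * t * a.el)⟩
  mul_assoc a b c := by
    show CGrp.mk _ _ = CGrp.mk _ _
    congr 1
    · exact mul_assoc _ _ _
    · funext t
      show a.fn (b.el * (c.el * t * c.el⁻¹) * b.el⁻¹) + b.fn (c.el * t * c.el⁻¹) + c.fn t
         = a.fn (b.el * c.el * t * (b.el * c.el)⁻¹) + (b.fn (c.el * t * c.el⁻¹) + c.fn t)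
      rw [add_assoc]
      congr 2
      group
  one_mul a := by
    show CGrp.mk _ _ = a
    cases a with | mk el fn =>
    congr 1
    · exact one_mul _
    · funext t; show (0 : W → ZMod 2) _ + fn t = fn t; simp [Pi.zero_apply]
  mul_one a := by
    show CGrp.mk _ _ = a
    cases a with | mk el fn =>
    congr 1
    · exact mul_one _
    · funext t; show fn (1 * t * 1⁻¹) + (0 : W → ZMod 2) t = fn t; simp
  inv_mul_cancel a := by
    show CGrp.mk _ _ = CGrp.mk 1 0
    congr 1
    · exact inv_mul_cancel _
    · funext t
      show a.fn (a.el⁻¹ * (a.el * t * a.el⁻¹) * a.el) + a.fn t = (0 : W → ZMod 2) t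
      have : a.el⁻¹ * (a.el * t * a.el⁻¹) * a.el = t := by group
      rw [this, Pi.zero_apply]
      exact CharTwo.add_self_eq_zero _

@[simp] theorem mul_el (a b : CGrp W) : (a * b).el = a.el * b.el := rfl
@[simp] theorem mul_fn (a b : CGrp W) (t : W) :
    (a * b).fn t = a.fn (b.el * t * b.el⁻¹) + b.fn t := rfl
@[simp] theorem one_el : (1 : CGrp W).el = 1 := rfl
@[simp] theorem one_fn (t : W) : (1 : CGrp W).fn t = 0 := rfl

theorem pow_fn (a : CGrp W) (k : ℕ) (t : W) :
    (a ^ k).fn t = ∑ r ∈ Finset.range k, a.fn (a.el ^ r * t * (a.el ^ r)⁻¹) := by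
  induction k generalizing t with
  | zero => simp [show ((1 : CGrp W)).fn t = 0 from rfl, pow_zero]
  | succ k ih =>
    rw [pow_succ]
    rw [mul_fn]
    rw [ih (a.el * t * a.el⁻¹)]
    rw [Finset.sum_range_succ']
    congr 1
    · apply Finset.sum_congr rfl
      intro r _
      congr 1
      rw [pow_succ]
      group
    · simp

@[simp] theorem pow_el (a : CGrp W) (k : ℕ) : (a ^ k).el = a.el ^ k := by
  induction k with
  | zero => rw [pow_zero, pow_zero]; rfl
  | succ k ih => rw [pow_succ, pow_succ, mul_el, ih]

end CGrp


attribute [ext] CGrp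

open CoxeterSystem List
open scoped Classical

theorem eraseIdx_append_left {α : Type*} (l l' : List α) (k : ℕ) (h : k < l.length) :
    (l ++ l').eraseIdx k = l.eraseIdx k ++ l' := by
  rw [List.eraseIdx_eq_take_drop_succ, List.eraseIdx_eq_take_drop_succ,
    List.take_append, List.drop_append,
    (by omega : k - l.length = 0)]
  rcases Nat.lt_or_ge (k+1) l.length with h2 | h2
  · rw [(by omega : k + 1 - l.length = 0)]; simp
  · have h3 : k + 1 = l.length := by omega
    rw [h3]; simp

theorem eraseIdx_append_right {α : Type*} (l l' : List α) (k : ℕ) (h : l.length ≤ k) :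
    (l ++ l').eraseIdx k = l ++ l'.eraseIdx (k - l.length) := by
  rw [List.eraseIdx_eq_take_drop_succ, List.eraseIdx_eq_take_drop_succ,
    List.take_append, List.drop_append,
    List.take_of_length_le (by omega), List.drop_of_length_le (by omega),
    (by omega : k + 1 - l.length = k - l.length + 1)]
  simp

variable {B W : Type*} [Group W] {M : CoxeterMatrix B} (cs : CoxeterSystem M W)

/-- The generator images for the cocycle lift. -/
noncomputable def cgen (i : B) : CGrp W := ⟨cs.simple i, fun t => if t = cs.simple i then 1 else 0⟩

private theorem sum_pair (g : ℕ → ZMod 2) (m : ℕ) :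
    ∑ r ∈ Finset.range m, (g (2 * r) + g (2 * r + 1)) = ∑ n ∈ Finset.range (2 * m), g n := by
  induction m with
  | zero => simp
  | succ m ih =>
    rw [Finset.sum_range_succ, ih, mul_add, mul_one, ← add_assoc,
      Finset.sum_range_succ, Finset.sum_range_succ]

theorem cgen_liftable : M.IsLiftable (cgen cs) := by
  intro i j
  set m := M i j with hm
  set q : W := cs.simple j * cs.simple i with hq
  have hq_pow : q ^ m = 1 := by rw [hq, hm]; exact cs.simple_mul_simple_pow' i j
  have hconj : ∀ r : ℕ, q ^ r * cs.simple j * q ^ r = cs.simple j := by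
    intro r
    induction r with
    | zero => simp
    | succ r ih =>
      have h1 : q ^ (r + 1) * cs.simple j * q ^ (r + 1)
          = q * (q ^ r * cs.simple j * q ^ r) * q := by group
      rw [h1, ih, hq]
      calc cs.simple j * cs.simple i * cs.simple j * (cs.simple j * cs.simple i)
          = cs.simple j * cs.simple i * (cs.simple j * cs.simple j) * cs.simple i := by group
        _ = cs.simple j := by
            rw [cs.simple_mul_simple_self j, mul_one, mul_assoc,
              cs.simple_mul_simple_self i, mul_one]
  have hA : ∀ r : ℕ, q ^ r * cs.simple j = cs.simple j * (q ^ r)⁻¹ := by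
    intro r
    conv_rhs => rw [← hconj r]
    group
  set b : ℕ → W := fun n => q ^ n * cs.simple j with hb
  have hbn : ∀ n, b n = q ^ n * cs.simple j := fun _ => rfl
  have hb_per : ∀ n, b (n + m) = b n := by
    intro n
    rw [hbn, hbn, pow_add, hq_pow, mul_one]
  set a : CGrp W := cgen cs i * cgen cs j with ha
  have hael : a.el = q⁻¹ := by
    simp only [ha, CGrp.mul_el, hq, cgen, mul_inv_rev, cs.inv_simple]
  have key : ∀ (t : W) (r : ℕ),
      a.fn (a.el ^ r * t * (a.el ^ r)⁻¹)
        = (if t = b (2 * r) then (1 : ZMod 2) else 0) + (if t = b (2 * r + 1) then 1 else 0) := by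
    intro t r
    have hfn : ∀ x : W, a.fn x
        = (if cs.simple j * x * cs.simple j = cs.simple i then (1 : ZMod 2) else 0)
          + (if x = cs.simple j then 1 else 0) := by
      intro x
      show (if (cgen cs j).el * x * (cgen cs j).el⁻¹ = cs.simple i then (1:ZMod 2) else 0) + _ = _
      simp only [cgen, cs.inv_simple]
    rw [hfn]
    have hel : a.el ^ r = (q ^ r)⁻¹ := by rw [hael, inv_pow]
    have e2 : (a.el ^ r * t * (a.el ^ r)⁻¹ = cs.simple j) ↔ (t = b (2 * r)) := by
      rw [hel, inv_inv]
      constructor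
      · intro h
        have : t = q ^ r * cs.simple j * (q ^ r)⁻¹ := by
          rw [← h]; group
        rw [this, mul_assoc, ← hA r, hbn, two_mul, pow_add]
        group
      · intro h
        rw [h, hbn]
        have h2 : q ^ (2 * r) * cs.simple j = q ^ r * (cs.simple j * (q ^ r)⁻¹) := by
          rw [← hA r, two_mul, pow_add]; group
        rw [h2]; group
    have e1 : (cs.simple j * (a.el ^ r * t * (a.el ^ r)⁻¹) * cs.simple j = cs.simple i)
        ↔ (t = b (2 * r + 1)) := by
      rw [hel, inv_inv]
      have hsis : cs.simple j * cs.simple i * cs.simple j = q * cs.simple j := by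
        rw [hq]
      constructor
      · intro h
        have cancel : ∀ x : W,
            cs.simple j * (cs.simple j * x * cs.simple j) * cs.simple j = x := by
          intro x
          calc cs.simple j * (cs.simple j * x * cs.simple j) * cs.simple j
              = (cs.simple j * cs.simple j) * x * (cs.simple j * cs.simple j) := by group
            _ = x := by rw [cs.simple_mul_simple_self j, one_mul, mul_one]
        have ht : t = q ^ r * (cs.simple j * cs.simple i * cs.simple j) * (q ^ r)⁻¹ := by
          rw [← h, cancel]
          group
        rw [ht, hsis, hbn]
        calc q ^ r * (q * cs.simple j) * (q ^ r)⁻¹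
            = q ^ (r + 1) * (cs.simple j * (q ^ r)⁻¹) := by rw [pow_succ']; group
          _ = q ^ (r + 1) * (q ^ r * cs.simple j) := by rw [← hA r]
          _ = q ^ (2 * r + 1) * cs.simple j := by rw [← mul_assoc, ← pow_add]; ring_nf
      · intro h
        rw [h, hbn]
        have h3 : q ^ (2 * r + 1) * cs.simple j
            = q ^ r * (q * cs.simple j) * (q ^ r)⁻¹ := by
          calc q ^ (2 * r + 1) * cs.simple j = q ^ (r + 1) * (q ^ r * cs.simple j) := by
                rw [← mul_assoc, ← pow_add]; ring_nf
            _ = q ^ (r + 1) * (cs.simple j * (q ^ r)⁻¹) := by rw [hA r]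
            _ = q ^ r * (q * cs.simple j) * (q ^ r)⁻¹ := by rw [pow_succ']; group
        rw [h3, ← hsis]
        group
        rw [cs.simple_mul_simple_self j, one_mul, mul_assoc, cs.simple_mul_simple_self j, mul_one]
    rw [if_congr e2 rfl rfl, if_congr e1 rfl rfl, add_comm]
  show a ^ m = 1
  refine CGrp.ext ?_ ?_
  · rw [CGrp.pow_el, hael, inv_pow, hq_pow, inv_one, CGrp.one_el]
  · funext t
    rw [CGrp.pow_fn]
    show _ = (1 : CGrp W).fn t
    rw [CGrp.one_fn]
    calc ∑ r ∈ Finset.range m, a.fn (a.el ^ r * t * (a.el ^ r)⁻¹)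
        = ∑ r ∈ Finset.range m,
            ((if t = b (2*r) then (1 : ZMod 2) else 0) + (if t = b (2*r+1) then 1 else 0)) := by
          exact Finset.sum_congr rfl fun r _ => key t r
      _ = ∑ n ∈ Finset.range (2 * m), (if t = b n then (1 : ZMod 2) else 0) :=
          sum_pair (fun n => if t = b n then 1 else 0) m
      _ = 0 := by
          rw [two_mul, Finset.sum_range_add, ← Finset.sum_add_distrib]
          refine Finset.sum_eq_zero fun n _ => ?_
          rw [show m + n = n + m from Nat.add_comm m n, hb_per n]
          exact CharTwo.add_self_eq_zero _

/-- The cocycle homomorphism. -/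
noncomputable def theta : W →* CGrp W := cs.lift ⟨cgen cs, cgen_liftable cs⟩

@[simp] theorem theta_simple (i : B) : theta cs (cs.simple i) = cgen cs i :=
  cs.lift_apply_simple (cgen_liftable cs) i

/-- Projection to the first component. -/
def elHom : CGrp W →* W where
  toFun a := a.el
  map_one' := rfl
  map_mul' _ _ := rfl

@[simp] theorem theta_el (w : W) : (theta cs w).el = w := by
  have : (elHom.comp (theta cs)) = MonoidHom.id W := by
    apply cs.ext_simple
    intro i
    simp [elHom, cgen]
  calc (theta cs w).el = (elHom.comp (theta cs)) w := rfl
    _ = w := by rw [this]; rfl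

/-- The reflection cocycle: `nn cs w t` is `1` iff `t` is a right inversion of `w`. -/
noncomputable def nn (w t : W) : ZMod 2 := (theta cs w).fn t

theorem nn_mul (u v t : W) : nn cs (u * v) t = nn cs u (v * t * v⁻¹) + nn cs v t := by
  unfold nn
  rw [map_mul, CGrp.mul_fn, theta_el]

theorem nn_one (t : W) : nn cs 1 t = 0 := by
  unfold nn
  rw [map_one]
  rfl

theorem nn_simple (i : B) (t : W) : nn cs (cs.simple i) t = if t = cs.simple i then 1 else 0 := by
  unfold nn
  rw [theta_simple]
  rfl

theorem nn_wordProd (ω : List B) (t : W) :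
    nn cs (cs.wordProd ω) t = ((cs.rightInvSeq ω).count t : ZMod 2) := by
  induction ω with
  | nil => rw [cs.wordProd_nil, nn_one]; simp
  | cons i ω ih =>
    rw [cs.wordProd_cons, nn_mul, nn_simple, ih]
    show _ = ((List.count t (((cs.wordProd ω)⁻¹ * (cs.simple i) * (cs.wordProd ω)) ::
      cs.rightInvSeq ω)) : ZMod 2)
    rw [List.count_cons]
    have : (cs.wordProd ω * t * (cs.wordProd ω)⁻¹ = cs.simple i)
        ↔ (t = (cs.wordProd ω)⁻¹ * cs.simple i * cs.wordProd ω) := by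
      constructor
      · intro h; rw [← h]; group
      · intro h; rw [h]; group
    rcases em (t = (cs.wordProd ω)⁻¹ * cs.simple i * cs.wordProd ω) with h | h
    · rw [if_pos (this.mpr h), if_pos (beq_iff_eq.mpr h.symm)]
      push_cast
      ring
    · rw [if_neg (fun hc => h (this.mp hc)), if_neg (fun hc => h (beq_iff_eq.mp hc).symm)]
      simp

theorem nn_refl_self (t : W) (ht : cs.IsReflection t) : nn cs t t = 1 := by
  obtain ⟨w, i, rfl⟩ := ht
  obtain ⟨ω, -, rfl⟩ := cs.exists_reduced_word' w
  induction ω with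
  | nil =>
    simp only [cs.wordProd_nil, one_mul, inv_one, mul_one]
    rw [nn_simple, if_pos rfl]
  | cons j ω ih =>
    set t' : W := cs.wordProd ω * cs.simple i * (cs.wordProd ω)⁻¹ with ht'
    have h1 : cs.simple j * cs.simple j = 1 := cs.simple_mul_simple_self j
    have hX : cs.wordProd (j :: ω) * cs.simple i * (cs.wordProd (j :: ω))⁻¹
        = cs.simple j * (t' * cs.simple j) := by
      rw [cs.wordProd_cons, ht', mul_inv_rev, cs.inv_simple]
      group
    rw [hX, nn_mul, nn_mul, nn_simple, nn_simple]
    have e1 : t' * cs.simple j * (cs.simple j * (t' * cs.simple j)) * (t' * cs.simple j)⁻¹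
        = t' := by
      calc t' * cs.simple j * (cs.simple j * (t' * cs.simple j)) * (t' * cs.simple j)⁻¹
          = t' * (cs.simple j * cs.simple j) := by group
        _ = t' := by rw [h1, mul_one]
    have e2 : cs.simple j * (cs.simple j * (t' * cs.simple j)) * (cs.simple j)⁻¹ = t' := by
      calc cs.simple j * (cs.simple j * (t' * cs.simple j)) * (cs.simple j)⁻¹
          = (cs.simple j * cs.simple j) * t' := by group
        _ = t' := by rw [h1, one_mul]
    rw [e1, e2, ih]
    have hiff : (cs.simple j * (t' * cs.simple j) = cs.simple j) ↔ (t' = cs.simple j) := by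
      constructor
      · intro h
        have h2 : t' * cs.simple j = 1 := by
          apply mul_left_cancel (a := cs.simple j)
          rw [mul_one]
          exact h
        have h3 : t' = (cs.simple j)⁻¹ := mul_eq_one_iff_eq_inv.mp h2
        rwa [cs.inv_simple] at h3
      · intro h
        rw [h, h1, mul_one]
    rcases em (t' = cs.simple j) with h | h
    · rw [if_pos h, if_pos (hiff.mpr h)]
      decide
    · rw [if_neg h, if_neg (fun hc => h (hiff.mp hc))]
      decide

theorem nn_mul_refl (w t : W) (ht : cs.IsReflection t) :
    nn cs (w * t) t = 1 + nn cs w t := by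
  rw [nn_mul, nn_refl_self cs t ht]
  have : t * t * t⁻¹ = t := by group
  rw [this, add_comm]

theorem zmod2_cases (x : ZMod 2) : x = 0 ∨ x = 1 := by
  fin_cases x
  · exact Or.inl rfl
  · exact Or.inr rfl

/-- `t` is a right inversion of `w` iff the cocycle value is `1`. -/
theorem isRightInversion_iff_nn_eq_one {w t : W} (ht : cs.IsReflection t) :
    cs.IsRightInversion w t ↔ nn cs w t = 1 := by
  constructor
  · intro h
    rcases zmod2_cases (nn cs w t) with h0 | h1
    · exfalso
      have h2 : nn cs (w * t) t = 1 := by rw [nn_mul_refl cs w t ht, h0, add_zero]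
      obtain ⟨ω, hred, hw⟩ := cs.exists_reduced_word' (w * t)
      rw [hw] at h2
      rw [nn_wordProd] at h2
      have hcount : (cs.rightInvSeq ω).count t ≠ 0 := by
        intro hc; rw [hc] at h2; simp at h2
      have hmem : t ∈ cs.rightInvSeq ω := List.count_pos_iff.mp (Nat.pos_of_ne_zero hcount)
      have hinv := cs.isRightInversion_of_mem_rightInvSeq hred hmem
      rw [← hw] at hinv
      have heq : w * t * t = w := by rw [mul_assoc, ht.mul_self, mul_one]
      have hlt2 := hinv.2
      rw [heq] at hlt2
      exact Nat.lt_asymm h.2 hlt2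
    · exact h1
  · intro h1
    obtain ⟨ω, hred, hw⟩ := cs.exists_reduced_word' w
    rw [hw, nn_wordProd] at h1
    have hcount : (cs.rightInvSeq ω).count t ≠ 0 := by
      intro hc; rw [hc] at h1; simp at h1
    have hmem : t ∈ cs.rightInvSeq ω := List.count_pos_iff.mp (Nat.pos_of_ne_zero hcount)
    have := cs.isRightInversion_of_mem_rightInvSeq hred hmem
    rwa [← hw] at this

/-- Strong exchange property. -/
theorem strong_exchange (ω : List B) {t : W} (ht : cs.IsReflection t)
    (hlt : cs.length (cs.wordProd ω * t) < cs.length (cs.wordProd ω)) :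
    ∃ k < ω.length, cs.wordProd ω * t = cs.wordProd (ω.eraseIdx k) := by
  have h1 : nn cs (cs.wordProd ω) t = 1 :=
    (isRightInversion_iff_nn_eq_one cs ht).mp ⟨ht, hlt⟩
  rw [nn_wordProd] at h1
  have hcount : (cs.rightInvSeq ω).count t ≠ 0 := by
    intro hc; rw [hc] at h1; simp at h1
  have hmem : t ∈ cs.rightInvSeq ω := List.count_pos_iff.mp (Nat.pos_of_ne_zero hcount)
  obtain ⟨k, hk, hkt⟩ := List.mem_iff_getElem.mp hmem
  rw [cs.length_rightInvSeq] at hk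
  refine ⟨k, hk, ?_⟩
  have := cs.wordProd_mul_getD_rightInvSeq ω k
  rw [List.getD_eq_getElem _ 1 (by rw [cs.length_rightInvSeq]; exact hk), hkt] at this
  exact this


theorem isReduced_nil : cs.IsReduced ([] : List B) := by
  unfold CoxeterSystem.IsReduced
  rw [cs.wordProd_nil, cs.length_one]
  rfl

private theorem exists_reduced_sublist_aux :
    ∀ (n : ℕ) (ω : List B), ω.length ≤ n →
      ∃ τ : List B, τ.Sublist ω ∧ cs.IsReduced τ ∧ cs.wordProd τ = cs.wordProd ω := by
  intro n
  induction n with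
  | zero =>
    intro ω hlen
    rw [Nat.le_zero, List.length_eq_zero_iff] at hlen
    subst hlen
    exact ⟨[], List.Sublist.refl _, isReduced_nil cs, rfl⟩
  | succ n ih =>
    intro ω hlen
    by_cases hred : cs.IsReduced ω
    · exact ⟨ω, List.Sublist.refl _, hred, rfl⟩
    · have hne : ω ≠ [] := by
        intro h; subst h; exact hred (isReduced_nil cs)
      have hlpos : 0 < ω.length := List.length_pos_iff.mpr hne
      have hex : ∃ k, ¬ cs.IsReduced (ω.take (k+1)) := by
        refine ⟨ω.length - 1, ?_⟩
        rw [show ω.length - 1 + 1 = ω.length by omega, List.take_length]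
        exact hred
      let k₀ := Nat.find hex
      have hk₀ : ¬ cs.IsReduced (ω.take (k₀+1)) := Nat.find_spec hex
      have hk₀le : k₀ ≤ ω.length - 1 := Nat.find_min' hex (by
        rw [show ω.length - 1 + 1 = ω.length by omega, List.take_length]
        exact hred)
      have hk₀lt : k₀ < ω.length := by omega
      have hτred : cs.IsReduced (ω.take k₀) := by
        rcases Nat.eq_zero_or_pos k₀ with h0 | h0
        · rw [h0, List.take_zero]; exact isReduced_nil cs
        · by_contra hc
          exact (Nat.find_min hex (show k₀ - 1 < k₀ by omega))
            (by rw [show k₀ - 1 + 1 = k₀ by omega]; exact hc)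
      set τ := ω.take k₀ with hτ
      set i := ω[k₀] with hi
      have htake1 : ω.take (k₀ + 1) = τ ++ [i] := by
        rw [hτ, hi, List.take_succ, List.getElem?_eq_getElem hk₀lt]
        rfl
      have hτlen : τ.length = k₀ := by
        rw [hτ, List.length_take]; omega
      have hℓτ : cs.length (cs.wordProd τ) = k₀ := by
        have := hτred
        unfold CoxeterSystem.IsReduced at this
        rw [this, hτlen]
      have hdesc : cs.length (cs.wordProd τ * cs.simple i) < cs.length (cs.wordProd τ) := by
        rcases cs.length_mul_simple (cs.wordProd τ) i with h | h
        · exfalso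
          apply hk₀
          unfold CoxeterSystem.IsReduced
          rw [htake1, cs.wordProd_append, cs.wordProd_singleton, h, List.length_append,
            hτlen, hℓτ]
          rfl
        · omega
      obtain ⟨k, hk, heq⟩ := strong_exchange cs τ (cs.isReflection_simple i) hdesc
      set ω' := τ.eraseIdx k ++ ω.drop (k₀ + 1) with hω'
      have hsub : ω'.Sublist ω := by
        have h1 : (τ.eraseIdx k).Sublist (τ ++ [i]) :=
          (List.eraseIdx_sublist τ k).trans (List.sublist_append_left τ [i])
        have h2 : ω'.Sublist (ω.take (k₀+1) ++ ω.drop (k₀+1)) := by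
          rw [htake1]
          exact List.Sublist.append h1 (List.Sublist.refl _)
        rwa [List.take_append_drop] at h2
      have hprod : cs.wordProd ω' = cs.wordProd ω := by
        rw [hω', cs.wordProd_append, ← heq]
        conv_rhs => rw [← List.take_append_drop (k₀+1) ω]
        rw [cs.wordProd_append, htake1, cs.wordProd_append, cs.wordProd_singleton]
      have hlen' : ω'.length ≤ n := by
        have h1 : (τ.eraseIdx k).length + 1 = τ.length := List.length_eraseIdx_add_one hk
        have h2 : (ω.drop (k₀+1)).length = ω.length - (k₀+1) := List.length_drop
        rw [hω', List.length_append]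
        omega
      obtain ⟨ρ, hρsub, hρred, hρprod⟩ := ih ω' hlen'
      exact ⟨ρ, hρsub.trans hsub, hρred, by rw [hρprod, hprod]⟩

theorem exists_reduced_sublist (ω : List B) :
    ∃ τ : List B, τ.Sublist ω ∧ cs.IsReduced τ ∧ cs.wordProd τ = cs.wordProd ω :=
  exists_reduced_sublist_aux cs ω.length ω le_rfl


/-- local copy of the parabolic subgroup definition (matches the target file). -/
def para (X : Set B) : Subgroup W := Subgroup.closure (cs.simple '' X)

theorem mem_para_iff (X : Set B) (w : W) :
    w ∈ para cs X ↔ ∃ ω : List B, (∀ i ∈ ω, i ∈ X) ∧ cs.wordProd ω = w := by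
  constructor
  · intro hw
    induction hw using Subgroup.closure_induction with
    | mem x hx =>
      obtain ⟨i, hiX, rfl⟩ := hx
      exact ⟨[i], by simpa using hiX, cs.wordProd_singleton i⟩
    | one => exact ⟨[], by simp, cs.wordProd_nil⟩
    | mul x y _ _ ihx ihy =>
      obtain ⟨ω₁, h₁, rfl⟩ := ihx
      obtain ⟨ω₂, h₂, rfl⟩ := ihy
      exact ⟨ω₁ ++ ω₂, by
        intro i hi
        rcases List.mem_append.mp hi with h | h
        exacts [h₁ i h, h₂ i h], cs.wordProd_append ω₁ ω₂⟩
    | inv x _ ihx =>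
      obtain ⟨ω, h, rfl⟩ := ihx
      exact ⟨ω.reverse, fun i hi => h i (List.mem_reverse.mp hi), cs.wordProd_reverse ω⟩
  · rintro ⟨ω, hω, rfl⟩
    induction ω with
    | nil => rw [cs.wordProd_nil]; exact one_mem _
    | cons j ω ih =>
      rw [cs.wordProd_cons]
      exact mul_mem (Subgroup.subset_closure ⟨j, hω j (List.mem_cons_self), rfl⟩)
        (ih fun i hi => hω i (List.mem_cons_of_mem j hi))

theorem exists_reduced_word_of_mem_para {X : Set B} {w : W} (hw : w ∈ para cs X) :
    ∃ ω : List B, (∀ i ∈ ω, i ∈ X) ∧ cs.IsReduced ω ∧ cs.wordProd ω = w := by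
  obtain ⟨ω, hω, rfl⟩ := (mem_para_iff cs X w).mp hw
  obtain ⟨τ, hsub, hred, hprod⟩ := exists_reduced_sublist cs ω
  exact ⟨τ, fun i hi => hω i (hsub.mem hi), hred, hprod⟩

theorem simple_mem_para {X : Set B} {i : B} (hi : i ∈ X) : cs.simple i ∈ para cs X :=
  Subgroup.subset_closure ⟨i, hi, rfl⟩

theorem exists_rightDescent_of_mem_para {X : Set B} {w : W} (hw : w ∈ para cs X)
    (hne : w ≠ 1) :
    ∃ i ∈ X, cs.length (w * cs.simple i) < cs.length w ∧ w * cs.simple i ∈ para cs X := by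
  obtain ⟨ω, hωX, hred, rfl⟩ := exists_reduced_word_of_mem_para cs hw
  have hne' : ω ≠ [] := by
    intro h; subst h; exact hne (cs.wordProd_nil)
  obtain ⟨ζ, i, rfl⟩ := (List.eq_nil_or_concat' ω).resolve_left hne'
  refine ⟨i, hωX i (by simp), ?_, ?_⟩
  · have h1 : cs.wordProd (ζ ++ [i]) * cs.simple i = cs.wordProd ζ := by
      rw [cs.wordProd_append, cs.wordProd_singleton, mul_assoc, cs.simple_mul_simple_self,
        mul_one]
    rw [h1]
    have h2 : cs.IsReduced ζ := by
      have := hred.take ζ.length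
      rwa [List.take_left] at this
    have h3 : cs.length (cs.wordProd ζ) = ζ.length := h2
    have h4 : cs.length (cs.wordProd (ζ ++ [i])) = ζ.length + 1 := by
      have := hred
      unfold CoxeterSystem.IsReduced at this
      rw [this, List.length_append, List.length_singleton]
    omega
  · have h1 : cs.wordProd (ζ ++ [i]) * cs.simple i = cs.wordProd ζ := by
      rw [cs.wordProd_append, cs.wordProd_singleton, mul_assoc, cs.simple_mul_simple_self,
        mul_one]
    rw [h1]
    exact (mem_para_iff cs X _).mpr ⟨ζ, fun j hj => hωX j (List.mem_append_left _ hj), rfl⟩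


/-- One step of the Bruhat order. -/
def bstep (a b : W) : Prop :=
  ∃ t : W, cs.IsReflection t ∧ b = a * t ∧ cs.length a < cs.length b

/-- The Bruhat order. -/
def ble : W → W → Prop := Relation.ReflTransGen (bstep cs)

theorem ble_refl (a : W) : ble cs a a := Relation.ReflTransGen.refl

theorem ble_trans {a b c : W} (h₁ : ble cs a b) (h₂ : ble cs b c) : ble cs a c :=
  Relation.ReflTransGen.trans h₁ h₂

theorem ble_length {a b : W} (h : ble cs a b) : cs.length a ≤ cs.length b := by
  induction h with
  | refl => exact le_rfl
  | tail _ hstep ih => exact ih.trans (le_of_lt (hstep.choose_spec.2.2))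

theorem ble_antisymm {a b : W} (h : ble cs a b) (hlen : cs.length b ≤ cs.length a) : a = b := by
  rcases Relation.ReflTransGen.cases_tail h with rfl | ⟨c, hac, hcb⟩
  · rfl
  · exfalso
    have h1 : cs.length a ≤ cs.length c := ble_length cs hac
    have h2 : cs.length c < cs.length b := hcb.choose_spec.2.2
    omega

private theorem bruhat_aux : ∀ n : ℕ,
    (∀ ω τ : List B, ω.length ≤ n → cs.IsReduced ω → cs.IsReduced τ → τ.Sublist ω →
       ble cs (cs.wordProd τ) (cs.wordProd ω)) ∧
    (∀ a b : W, cs.length b ≤ n → ble cs a b → ∀ i : B,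
       ble cs (a * cs.simple i) b ∨ ble cs (a * cs.simple i) (b * cs.simple i)) := by
  intro n
  induction n with
  | zero =>
    constructor
    · intro ω τ hlen _ _ hsub
      rw [Nat.le_zero, List.length_eq_zero_iff] at hlen
      subst hlen
      rw [List.sublist_nil.mp hsub]
      exact ble_refl cs _
    · intro a b hlen hab i
      have hb1 : b = 1 := cs.length_eq_zero_iff.mp (Nat.le_zero.mp hlen)
      have ha1 : a = 1 := cs.length_eq_zero_iff.mp
        (Nat.le_zero.mp ((ble_length cs hab).trans hlen))
      subst hb1; subst ha1
      exact Or.inr (ble_refl cs _)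
  | succ n ih =>
    obtain ⟨ihD, ihM⟩ := ih
    have hSSL : ∀ c b : W, cs.length b ≤ n + 1 → bstep cs c b → ∀ i : B,
        ble cs (c * cs.simple i) b ∨ ble cs (c * cs.simple i) (b * cs.simple i) := by
      intro c b hblen hstep i
      obtain ⟨t, hrt, rfl, hlt⟩ := hstep
      rcases cs.length_mul_simple c i with hc | hc
      · -- length goes up
        rcases cs.length_mul_simple (c * t) i with hb | hb
        · -- both up : direct step
          refine Or.inr (Relation.ReflTransGen.single
            ⟨cs.simple i * t * cs.simple i, ?_, ?_, ?_⟩)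
          · have := hrt.conj (cs.simple i)
            rwa [cs.inv_simple] at this
          · calc c * t * cs.simple i
                = c * (cs.simple i * cs.simple i) * t * cs.simple i := by
                  rw [cs.simple_mul_simple_self, mul_one]
              _ = c * cs.simple i * (cs.simple i * t * cs.simple i) := by group
          · omega
        · -- b goes down : exchange argument
          obtain ⟨ζ, hζred, hζprod⟩ := cs.exists_reduced_word' (c * t * cs.simple i)
          have hωred : cs.IsReduced (ζ ++ [i]) := by
            unfold CoxeterSystem.IsReduced
            rw [cs.wordProd_append, cs.wordProd_singleton, ← hζprod, mul_assoc,
              cs.simple_mul_simple_self, mul_one]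
            have hζlen : cs.length (cs.wordProd ζ) = ζ.length := hζred
            rw [List.length_append, List.length_singleton]
            rw [← hζprod] at hζlen
            omega
          have hωprod : cs.wordProd (ζ ++ [i]) = c * t := by
            rw [cs.wordProd_append, cs.wordProd_singleton, ← hζprod, mul_assoc,
              cs.simple_mul_simple_self, mul_one]
          have hexc : cs.length (cs.wordProd (ζ ++ [i]) * t) <
              cs.length (cs.wordProd (ζ ++ [i])) := by
            rw [hωprod, mul_assoc, hrt.mul_self, mul_one]
            exact hlt
          obtain ⟨k, hk, heq⟩ := strong_exchange cs (ζ ++ [i]) hrt hexc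
          have hceq : c = cs.wordProd ((ζ ++ [i]).eraseIdx k) := by
            rw [← heq, hωprod, mul_assoc, hrt.mul_self, mul_one]
          rw [List.length_append, List.length_singleton] at hk
          rcases Nat.lt_or_ge k ζ.length with hk' | hk'
          · -- erased inside ζ
            have he : (ζ ++ [i]).eraseIdx k = ζ.eraseIdx k ++ [i] :=
              eraseIdx_append_left ζ [i] k hk'
            have hcsi : c * cs.simple i = cs.wordProd (ζ.eraseIdx k) := by
              rw [hceq, he, cs.wordProd_append, cs.wordProd_singleton, mul_assoc,
                cs.simple_mul_simple_self, mul_one]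
            obtain ⟨ρ, hρsub, hρred, hρprod⟩ := exists_reduced_sublist cs (ζ.eraseIdx k)
            have hρζ : ρ.Sublist ζ := hρsub.trans (List.eraseIdx_sublist ζ k)
            have hble := ihD ζ ρ (by
              have : cs.length (cs.wordProd ζ) = ζ.length := hζred
              rw [← hζprod] at this
              omega) hζred hρred hρζ
            rw [hρprod, ← hcsi, ← hζprod] at hble
            exact Or.inr hble
          · -- erased the final letter
            have hkeq : k = ζ.length := by omega
            have he : (ζ ++ [i]).eraseIdx k = ζ := by
              rw [hkeq, eraseIdx_append_right ζ [i] ζ.length le_rfl, Nat.sub_self]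
              simp
            have hthis : c = c * t * cs.simple i :=
              hceq.trans (by rw [he]; exact hζprod.symm)
            refine Or.inl ?_
            have hcsib : c * cs.simple i = c * t := by
              conv_lhs => rw [hthis]
              rw [mul_assoc, cs.simple_mul_simple_self, mul_one]
            rw [hcsib]
            exact ble_refl cs _
      · -- length of c * s i goes down : two steps
        refine Or.inl (Relation.ReflTransGen.head ⟨cs.simple i, cs.isReflection_simple i, ?_, ?_⟩
          (Relation.ReflTransGen.single ⟨t, hrt, rfl, hlt⟩))
        · rw [mul_assoc, cs.simple_mul_simple_self, mul_one]
        · omega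
    constructor
    · -- Dir2
      intro ω τ hlen hωred hτred hsub
      rcases List.eq_nil_or_concat' ω with rfl | ⟨ζ, j, rfl⟩
      · rw [List.sublist_nil.mp hsub]
        exact ble_refl cs _
      · have hζred : cs.IsReduced ζ := by
          have := hωred.take ζ.length
          rwa [List.take_left] at this
        have hζlen : cs.length (cs.wordProd ζ) = ζ.length := hζred
        have hωlen : cs.length (cs.wordProd (ζ ++ [j])) = ζ.length + 1 := by
          have : cs.length (cs.wordProd (ζ ++ [j])) = (ζ ++ [j]).length := hωred
          rwa [List.length_append, List.length_singleton] at this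
        have hstep : bstep cs (cs.wordProd ζ) (cs.wordProd (ζ ++ [j])) := by
          refine ⟨cs.simple j, cs.isReflection_simple j, ?_, by omega⟩
          rw [cs.wordProd_append, cs.wordProd_singleton]
        obtain ⟨τ₁, τ₂, rfl, hτ₁, hτ₂⟩ := List.sublist_append_iff.mp hsub
        have hlenζ : ζ.length ≤ n := by
          rw [List.length_append, List.length_singleton] at hlen
          omega
        rcases List.sublist_singleton.mp hτ₂ with rfl | rfl
        · have hτ₁red : cs.IsReduced τ₁ := by rwa [List.append_nil] at hτred
          have := ihD ζ τ₁ hlenζ hζred hτ₁red hτ₁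
          rw [List.append_nil]
          exact Relation.ReflTransGen.tail this hstep
        · have hτ₁red : cs.IsReduced τ₁ := by
            have := hτred.take τ₁.length
            rwa [List.take_left] at this
          have hble := ihD ζ τ₁ hlenζ hζred hτ₁red hτ₁
          have hM := ihM (cs.wordProd τ₁) (cs.wordProd ζ) (by omega) hble j
          rcases hM with h | h
          · have : ble cs (cs.wordProd τ₁ * cs.simple j) (cs.wordProd (ζ ++ [j])) :=
              Relation.ReflTransGen.tail h hstep
            rwa [← cs.wordProd_singleton j, ← cs.wordProd_append] at this
          · rw [← cs.wordProd_singleton j, ← cs.wordProd_append, ← cs.wordProd_append] at h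
            exact h
    · -- M2
      intro a b hblen hab i
      rcases Relation.ReflTransGen.cases_tail hab with rfl | ⟨c, hac, hcb⟩
      · exact Or.inr (ble_refl cs _)
      · have hclen : cs.length c ≤ n := by
          have := hcb.choose_spec.2.2
          omega
        rcases ihM a c hclen hac i with h | h
        · exact Or.inl (ble_trans cs h (Relation.ReflTransGen.single hcb))
        · rcases hSSL c b hblen hcb i with h2 | h2
          · exact Or.inl (ble_trans cs h h2)
          · exact Or.inr (ble_trans cs h h2)

theorem bruhat_sublist {ω τ : List B} (hωred : cs.IsReduced ω) (hτred : cs.IsReduced τ)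
    (hsub : τ.Sublist ω) : ble cs (cs.wordProd τ) (cs.wordProd ω) :=
  (bruhat_aux cs ω.length).1 ω τ le_rfl hωred hτred hsub

theorem ble_one_left (w : W) : ble cs 1 w := by
  obtain ⟨ω, hred, rfl⟩ := cs.exists_reduced_word' w
  have := bruhat_sublist cs hred (isReduced_nil cs) (List.nil_sublist ω)
  rwa [cs.wordProd_nil] at this

theorem bruhat_lift {a b : W} (hab : ble cs a b) (i : B) :
    ble cs (a * cs.simple i) b ∨ ble cs (a * cs.simple i) (b * cs.simple i) :=
  (bruhat_aux cs (cs.length b)).2 a b le_rfl hab i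

/-- MAIN-B : if `u ∈ W_X` has all of `X` as right descents, every `v ∈ W_X` is below `u`. -/
theorem ble_of_all_descents {X : Set B} {u : W}
    (hdesc : ∀ i ∈ X, cs.length (u * cs.simple i) < cs.length u) :
    ∀ v ∈ para cs X, ble cs v u := by
  suffices h : ∀ n : ℕ, ∀ v ∈ para cs X, cs.length v ≤ n → ble cs v u by
    intro v hv
    exact h (cs.length v) v hv le_rfl
  intro n
  induction n with
  | zero =>
    intro v _ hlen
    rw [cs.length_eq_zero_iff.mp (Nat.le_zero.mp hlen)]
    exact ble_one_left cs u
  | succ n ih =>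
    intro v hv hlen
    rcases em (v = 1) with rfl | hne
    · exact ble_one_left cs u
    · obtain ⟨i, hiX, hilt, hmem⟩ := exists_rightDescent_of_mem_para cs hv hne
      have hble := ih (v * cs.simple i) hmem (by omega)
      have hv2 : v * cs.simple i * cs.simple i = v := by
        rw [mul_assoc, cs.simple_mul_simple_self, mul_one]
      rcases bruhat_lift cs hble i with h | h
      · rwa [hv2] at h
      · rw [hv2] at h
        exact ble_trans cs h (Relation.ReflTransGen.single
          ⟨cs.simple i, cs.isReflection_simple i, by
            rw [mul_assoc, cs.simple_mul_simple_self, mul_one], hdesc i hiX⟩)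


theorem length_le_of_all_descents {X : Set B} {u : W}
    (hdesc : ∀ i ∈ X, cs.length (u * cs.simple i) < cs.length u) :
    ∀ v ∈ para cs X, cs.length v ≤ cs.length u :=
  fun v hv => ble_length cs (ble_of_all_descents cs hdesc v hv)

theorem all_descents_of_longest {X : Set B} {u : W} (hu : u ∈ para cs X)
    (hlong : ∀ v ∈ para cs X, cs.length v ≤ cs.length u) :
    ∀ i ∈ X, cs.length (u * cs.simple i) < cs.length u := by
  intro i hiX
  have hmem : u * cs.simple i ∈ para cs X := mul_mem hu (simple_mem_para cs hiX)
  have hle := hlong _ hmem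
  have hne := cs.length_mul_simple_ne u i
  omega

theorem longest_unique {X : Set B} {u₁ u₂ : W} (hu₁ : u₁ ∈ para cs X) (hu₂ : u₂ ∈ para cs X)
    (hlong₁ : ∀ v ∈ para cs X, cs.length v ≤ cs.length u₁)
    (hlong₂ : ∀ v ∈ para cs X, cs.length v ≤ cs.length u₂) : u₁ = u₂ := by
  have hdesc₂ := all_descents_of_longest cs hu₂ hlong₂
  have hble : ble cs u₁ u₂ := ble_of_all_descents cs hdesc₂ u₁ hu₁
  exact ble_antisymm cs hble (hlong₁ u₂ hu₂)

/-- The key construction: if every element of `X` is a right descent of `w`, then there is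
`u ∈ W_X` which has all of `X` as right descents and splits off of `w`. -/
theorem exists_max_elt {X : Set B} {w : W}
    (hdesc : ∀ i ∈ X, cs.length (w * cs.simple i) < cs.length w) :
    ∃ u ∈ para cs X, (∀ i ∈ X, cs.length (u * cs.simple i) < cs.length u) ∧
      cs.length (w * u⁻¹) + cs.length u = cs.length w := by
  set A : Set W := {v | v ∈ para cs X ∧ cs.length (w * v⁻¹) + cs.length v = cs.length w}
    with hA
  have h1A : (1 : W) ∈ A := by
    constructor
    · exact one_mem _
    · rw [inv_one, mul_one, cs.length_one, add_zero]
  set N : Set ℕ := cs.length '' A with hN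
  have hNne : N.Nonempty := ⟨cs.length 1, ⟨1, h1A, rfl⟩⟩
  have hNbdd : BddAbove N := by
    refine ⟨cs.length w, ?_⟩
    rintro n ⟨v, ⟨_, hsum⟩, rfl⟩
    omega
  obtain ⟨u, huA, hulen⟩ := Nat.sSup_mem hNne hNbdd
  obtain ⟨huX, husum⟩ := huA
  have humax : ∀ v ∈ A, cs.length v ≤ cs.length u := by
    intro v hv
    rw [hulen]
    exact le_csSup hNbdd ⟨v, hv, rfl⟩
  refine ⟨u, huX, ?_, husum⟩
  intro i hiX
  rcases cs.length_mul_simple u i with hui | hui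
  swap
  · omega
  -- the "ascent" case leads to a contradiction
  exfalso
  set z := w * u⁻¹ with hz
  obtain ⟨ζ, hζred, hζprod⟩ := cs.exists_reduced_word' z
  obtain ⟨υ, hυX, hυred, hυprod⟩ := exists_reduced_word_of_mem_para cs huX
  have hωprod : cs.wordProd (ζ ++ υ) = w := by
    rw [cs.wordProd_append, ← hζprod, hυprod, hz, inv_mul_cancel_right]
  have hζlen : cs.length z = ζ.length := by rw [hζprod]; exact hζred
  have hυlen : cs.length u = υ.length := by rw [← hυprod]; exact hυred
  have hexc : cs.length (cs.wordProd (ζ ++ υ) * cs.simple i) <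
      cs.length (cs.wordProd (ζ ++ υ)) := by
    rw [hωprod]; exact hdesc i hiX
  obtain ⟨k, hk, heq⟩ := strong_exchange cs (ζ ++ υ) (cs.isReflection_simple i) hexc
  rw [List.length_append] at hk
  rcases Nat.lt_or_ge k ζ.length with hk' | hk'
  · -- erased in ζ : contradicts maximality
    have he : (ζ ++ υ).eraseIdx k = ζ.eraseIdx k ++ υ := eraseIdx_append_left ζ υ k hk'
    have hwsi : w * cs.simple i = cs.wordProd (ζ.eraseIdx k) * u := by
      rw [← hωprod, heq, he, cs.wordProd_append, hυprod]
    have hv' : u * cs.simple i ∈ para cs X := mul_mem huX (simple_mem_para cs hiX)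
    have hwv' : w * (u * cs.simple i)⁻¹ = cs.wordProd (ζ.eraseIdx k) := by
      rw [mul_inv_rev, cs.inv_simple, ← mul_assoc, hwsi, mul_inv_cancel_right]
    have hle : cs.length (w * (u * cs.simple i)⁻¹) + 1 ≤ ζ.length := by
      rw [hwv']
      have h1 := cs.length_wordProd_le (ζ.eraseIdx k)
      have h2 := List.length_eraseIdx_add_one hk'
      omega
    have hge : cs.length w ≤ cs.length (w * (u * cs.simple i)⁻¹) + cs.length (u * cs.simple i) := by
      have h1 := cs.length_mul_le (w * (u * cs.simple i)⁻¹) (u * cs.simple i)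
      rw [inv_mul_cancel_right] at h1
      exact h1
    have hmemA : u * cs.simple i ∈ A := by
      refine ⟨hv', ?_⟩
      omega
    have := humax _ hmemA
    omega
  · -- erased in υ : contradicts the ascent
    have hkυ : k - ζ.length < υ.length := by omega
    have he : (ζ ++ υ).eraseIdx k = ζ ++ υ.eraseIdx (k - ζ.length) :=
      eraseIdx_append_right ζ υ k hk'
    have husi : u * cs.simple i = cs.wordProd (υ.eraseIdx (k - ζ.length)) := by
      have h1 : w * cs.simple i = z * cs.wordProd (υ.eraseIdx (k - ζ.length)) := by
        rw [← hωprod, heq, he, cs.wordProd_append, hζprod]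
      have h2 : z⁻¹ * w = u := by rw [hz]; group
      calc u * cs.simple i = z⁻¹ * (w * cs.simple i) := by rw [← mul_assoc, h2]
        _ = cs.wordProd (υ.eraseIdx (k - ζ.length)) := by rw [h1, inv_mul_cancel_left]
    have h3 := cs.length_wordProd_le (υ.eraseIdx (k - ζ.length))
    have h4 := List.length_eraseIdx_add_one hkυ
    rw [← husi] at h3
    omega

theorem para_finite [Finite B] {X : Set B} {u : W}
    (hlong : ∀ v ∈ para cs X, cs.length v ≤ cs.length u) :
    ((para cs X : Set W)).Finite := by
  have hsub : (para cs X : Set W) ⊆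
      (fun ω : List B => cs.wordProd ω) '' {ω | ω.length ≤ cs.length u} := by
    intro v hv
    obtain ⟨ω, hred, rfl⟩ := cs.exists_reduced_word' v
    refine ⟨ω, ?_, rfl⟩
    have : cs.length (cs.wordProd ω) = ω.length := hred
    have := hlong _ hv
    simp only [Set.mem_setOf_eq]
    omega
  exact ((List.finite_length_le B (cs.length u)).image _).subset hsub

end CoxFix


open CoxFix in
/-- `W^G` is generated by the longest elements `w_X`, `X ∈ 𝒮`. -/
theorem fixedSubgroup_generated_by_longest_elements
    {S W G : Type*} [Fintype S] [Group W] [Group G] [MulAction G S]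
    (M : CoxeterMatrix S) (cs : CoxeterSystem M W)
    (hGM : ∀ (g : G) (s t : S), M (g • s) (g • t) = M s t)
    (φ : G →* MulAut W) (hφ : ∀ (g : G) (s : S), φ g (cs.simple s) = cs.simple (g • s)) :
    Subgroup.closure {w : W | ∃ X : Set S, IsFinOrbit cs G X ∧ IsLongestElement cs X w}
      = fixedSubgroup φ := by
  have hpara : ∀ X : Set S, parabolic cs X = CoxFix.para cs X := fun _ => rfl
  have hmemfix : ∀ w : W, w ∈ fixedSubgroup φ ↔ ∀ g : G, φ g w = w := fun w => Iff.rfl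
  -- φ g preserves word products
  have hφword : ∀ (g : G) (ω : List S),
      φ g (cs.wordProd ω) = cs.wordProd (ω.map (fun i => g • i)) := by
    intro g ω
    induction ω with
    | nil => rw [cs.wordProd_nil, map_one, List.map_nil, cs.wordProd_nil]
    | cons i ω ih =>
      rw [cs.wordProd_cons, map_mul, ih, hφ g i, List.map_cons, cs.wordProd_cons]
  -- φ g preserves lengths
  have hφlen_le : ∀ (g : G) (w : W), cs.length (φ g w) ≤ cs.length w := by
    intro g w
    obtain ⟨ω, hred, rfl⟩ := cs.exists_reduced_word' w
    rw [hφword g ω]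
    have h1 := cs.length_wordProd_le (ω.map (fun i => g • i))
    rw [List.length_map] at h1
    have h2 : cs.length (cs.wordProd ω) = ω.length := hred
    omega
  have hφlen : ∀ (g : G) (w : W), cs.length (φ g w) = cs.length w := by
    intro g w
    have h1 := hφlen_le g w
    have h2 := hφlen_le g⁻¹ (φ g w)
    have h3 : φ g⁻¹ (φ g w) = w := by
      rw [map_inv]
      exact (φ g).symm_apply_apply w
    rw [h3] at h2
    omega
  -- φ g maps parabolic subgroups of invariant X into themselves
  have hφpara : ∀ (g : G) (X : Set S), (∀ i ∈ X, g • i ∈ X) →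
      ∀ w ∈ para cs X, φ g w ∈ para cs X := by
    intro g X hX w hw
    obtain ⟨ω, hωX, rfl⟩ := (mem_para_iff cs X _).mp hw
    rw [hφword g ω]
    refine (mem_para_iff cs X _).mpr ⟨ω.map (fun i => g • i), ?_, rfl⟩
    intro i hi
    obtain ⟨j, hj, rfl⟩ := List.mem_map.mp hi
    exact hX j (hωX j hj)
  -- orbits are invariant
  have horb : ∀ (g : G) (s₀ : S) (i : S), i ∈ MulAction.orbit G s₀ →
      g • i ∈ MulAction.orbit G s₀ := by
    intro g s₀ i hi
    rw [← MulAction.smul_orbit g s₀]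
    exact Set.smul_mem_smul_set hi
  -- any longest element of an invariant parabolic is fixed
  have hfixlong : ∀ (X : Set S), (∀ (g : G), ∀ i ∈ X, g • i ∈ X) →
      ∀ u : W, u ∈ para cs X → (∀ v ∈ para cs X, cs.length v ≤ cs.length u) →
      ∀ g : G, φ g u = u := by
    intro X hX u huX hulong g
    have h1 : φ g u ∈ para cs X := hφpara g X (hX g) u huX
    have h2 : ∀ v ∈ para cs X, cs.length v ≤ cs.length (φ g u) := by
      intro v hv
      rw [hφlen g u]
      exact hulong v hv
    exact longest_unique cs h1 huX h2 hulong
  apply le_antisymm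
  · -- closure of longest elements ⊆ fixed subgroup
    rw [Subgroup.closure_le]
    rintro w₀ ⟨X, ⟨⟨s₀, rfl⟩, -⟩, hw₀mem, hw₀long⟩
    rw [SetLike.mem_coe, hmemfix]
    rw [hpara] at hw₀mem
    refine hfixlong _ (fun g i hi => horb g s₀ i hi) w₀ hw₀mem ?_
    intro v hv
    exact hw₀long v (by rw [hpara]; exact hv)
  · -- fixed subgroup ⊆ closure of longest elements
    intro w hw
    rw [hmemfix] at hw
    suffices h : ∀ (n : ℕ) (w : W), cs.length w ≤ n → (∀ g : G, φ g w = w) →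
        w ∈ Subgroup.closure {w : W | ∃ X : Set S,
          IsFinOrbit cs G X ∧ IsLongestElement cs X w} by
      exact h (cs.length w) w le_rfl hw
    intro n
    induction n with
    | zero =>
      intro w hlen _
      rw [cs.length_eq_zero_iff.mp (Nat.le_zero.mp hlen)]
      exact one_mem _
    | succ n ih =>
      intro w hlen hw
      rcases em (w = 1) with rfl | hne
      · exact one_mem _
      · obtain ⟨i, hdi⟩ := cs.exists_rightDescent_of_ne_one hne
        set X : Set S := MulAction.orbit G i with hX
        have hXinv : ∀ (g : G), ∀ j ∈ X, g • j ∈ X := fun g j hj => horb g i j hj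
        have hdescX : ∀ j ∈ X, cs.length (w * cs.simple j) < cs.length w := by
          rintro j ⟨g, rfl⟩
          have h1 : w * cs.simple (g • i) = φ g (w * cs.simple i) := by
            rw [map_mul, hw g, hφ g i]
          rw [h1, hφlen]
          exact hdi
        obtain ⟨u, huX, hudesc, husum⟩ := exists_max_elt cs hdescX
        have hulong : ∀ v ∈ para cs X, cs.length v ≤ cs.length u :=
          length_le_of_all_descents cs hudesc
        have hufin : ((para cs X : Set W)).Finite := para_finite cs hulong
        have hu1 : 1 ≤ cs.length u := by
          have h1 : cs.simple i ∈ para cs X :=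
            simple_mem_para cs (MulAction.mem_orbit_self i)
          have h2 := hulong _ h1
          rw [cs.length_simple] at h2
          exact h2
        have hufix : ∀ g : G, φ g u = u := hfixlong X hXinv u huX hulong
        have hugen : u ∈ {w : W | ∃ X : Set S, IsFinOrbit cs G X ∧ IsLongestElement cs X w} := by
          refine ⟨X, ⟨⟨i, rfl⟩, by rw [hpara]; exact hufin⟩, ?_, ?_⟩
          · rw [hpara]; exact huX
          · intro v hv
            rw [hpara] at hv
            exact hulong v hv
        have hw'fix : ∀ g : G, φ g (w * u⁻¹) = w * u⁻¹ := by
          intro g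
          rw [map_mul, map_inv, hw g, hufix g]
        have hw'len : cs.length (w * u⁻¹) ≤ n := by
          have hwpos : 1 ≤ cs.length w := by
            by_contra hc
            exact hne (cs.length_eq_zero_iff.mp (by omega))
          omega
        have hw' := ih (w * u⁻¹) hw'len hw'fix
        have : w = (w * u⁻¹) * u := by rw [inv_mul_cancel_right]
        rw [this]
        exact mul_mem hw' (Subgroup.subset_closure hugen)




end CoxeterFixedPoints
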